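/- Let K be a field of characteristic zero and let a, b, c, d, u, w ∈ K with u ≠ −1 and w² = a²(u⁶ + 1) + 2ab(u⁵ + u) + (b² + 2ab − 4cd)(u⁴ + u²) + (2a² + 2b² − 4c² − 4d²)u³. Set x₀ = −u/(u+1)² and y₀ = w/(u+1)³. Then y₀² = A₀x₀³ + B₀x₀² + C₀x₀ + D₀, where A₀ = 4(c − d)², B₀ = (3a − b)² − 4cd, C₀ = 2a(3a − b), and D₀ = a². -/

import Mathlib

/-- Given `w² = a²(u⁶+1) + 2ab(u⁵+u) + (b²+2ab−4cd)(u⁴+u²) + (2a²+2b²−4c²−4d²)u³` with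
`u ≠ −1`, the substitution `x₀ = −u/(u+1)²`, `y₀ = w/(u+1)³` satisfies
`y₀² = A₀x₀³ + B₀x₀² + C₀x₀ + D₀` with `A₀ = 4(c−d)²`, `B₀ = (3a−b)² − 4cd`,
`C₀ = 2a(3a−b)`, `D₀ = a²`. -/
theorem statement9 {K : Type*} [Field K] [CharZero K] (a b c d u w : K)
    (hu : u ≠ -1)
    (h : w ^ 2 = a ^ 2 * (u ^ 6 + 1) + 2 * a * b * (u ^ 5 + u) +
        (b ^ 2 + 2 * a * b - 4 * c * d) * (u ^ 4 + u ^ 2) +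
        (2 * a ^ 2 + 2 * b ^ 2 - 4 * c ^ 2 - 4 * d ^ 2) * u ^ 3)
    (x₀ y₀ : K) (hx₀ : x₀ = -u / (u + 1) ^ 2) (hy₀ : y₀ = w / (u + 1) ^ 3) :
    y₀ ^ 2 = 4 * (c - d) ^ 2 * x₀ ^ 3 + ((3 * a - b) ^ 2 - 4 * c * d) * x₀ ^ 2 +
        2 * a * (3 * a - b) * x₀ + a ^ 2 := by
  have hne : u + 1 ≠ 0 := fun h0 => hu (by linear_combination h0)
  subst hx₀ hy₀
  set_option maxHeartbeats 1000000 in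
  field_simp
  linear_combination h
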